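/- Let Y be an ℝ^d-valued random variable whose law is absolutely continuous with respect to Lebesgue measure, Y_n = Y + (1/n)θ(nY), and ψ ∈ L¹([−1/2,1/2]^d). Then for any random variable X, (X, ψ(n(Y_n - Y))) converges in distribution to (X, ψ(V)) where V is uniform on (−1/2,1/2)^d independent of X. -/

import Mathlib

open MeasureTheory Filter Topology
open scoped NNReal ENNReal BoundedContinuousFunction

/-- Componentwise rounding error function: `θ(y)_i = 1/2 − {yᵢ}`. -/
noncomputable def roundTheta {d : ℕ} (y : Fin d → ℝ) : Fin d → ℝ :=
  fun i => 1 / 2 - Int.fract (y i)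

namespace Stmt8Aux

variable {d : ℕ}

def cubeIoc (d : ℕ) : Set (Fin d → ℝ) := Set.univ.pi fun _ => Set.Ioc (-(1/2) : ℝ) (1/2)
def cubeIoo (d : ℕ) : Set (Fin d → ℝ) := Set.univ.pi fun _ => Set.Ioo (-(1/2) : ℝ) (1/2)

noncomputable def T (d n : ℕ) (y : Fin d → ℝ) : Fin d → ℝ := roundTheta ((n : ℝ) • y)

def cell (d n : ℕ) (k : Fin d → ℤ) : Set (Fin d → ℝ) :=
  Set.univ.pi fun i => Set.Ico ((k i : ℝ) / n) (((k i : ℝ) + 1) / n)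

lemma measurable_T (n : ℕ) : Measurable (T d n) := by
  apply measurable_pi_lambda
  intro i
  exact (measurable_const.sub ((measurable_fract.comp
    ((measurable_const.mul (measurable_pi_apply i)))))).comp measurable_id |>.comp measurable_id

lemma measurableSet_cubeIoc : MeasurableSet (cubeIoc d) :=
  MeasurableSet.univ_pi fun _ => measurableSet_Ioc

lemma measurableSet_cubeIoo : MeasurableSet (cubeIoo d) :=
  MeasurableSet.univ_pi fun _ => measurableSet_Ioo

lemma measurableSet_cell (n : ℕ) (k : Fin d → ℤ) : MeasurableSet (cell d n k) :=
  MeasurableSet.univ_pi fun _ => measurableSet_Ico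

lemma volume_cubeIoc : volume (cubeIoc d) = 1 := by
  rw [cubeIoc, volume_pi_pi]
  simp [Real.volume_Ioc]; norm_num

lemma volume_cubeIoo : volume (cubeIoo d) = 1 := by
  rw [cubeIoo, volume_pi_pi]
  simp [Real.volume_Ioo]; norm_num

lemma restrict_cube_eq :
    (volume : Measure (Fin d → ℝ)).restrict (cubeIoc d) = volume.restrict (cubeIoo d) := by
  apply Measure.restrict_congr_set
  have hsub1 : cubeIoo d ⊆ cubeIoc d := fun y hy i hi => Set.Ioo_subset_Ioc_self (hy i hi)
  have hsubIcc : cubeIoc d ⊆ Set.univ.pi fun _ : Fin d => Set.Icc (-(1/2) : ℝ) (1/2) :=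
    fun y hy i hi => Set.Ioc_subset_Icc_self (hy i hi)
  have hIcc : volume (Set.univ.pi fun _ : Fin d => Set.Icc (-(1/2) : ℝ) (1/2)) = 1 := by
    rw [volume_pi_pi]; simp [Real.volume_Icc]; norm_num
  have hdiff : volume ((Set.univ.pi fun _ : Fin d => Set.Icc (-(1/2) : ℝ) (1/2)) \ cubeIoo d) = 0 := by
    have hsub : cubeIoo d ⊆ Set.univ.pi fun _ : Fin d => Set.Icc (-(1/2) : ℝ) (1/2) :=
      fun y hy i hi => Set.Ioo_subset_Icc_self (hy i hi)
    rw [measure_diff hsub measurableSet_cubeIoo.nullMeasurableSet (by simp [volume_cubeIoo]),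
      hIcc, volume_cubeIoo, tsub_self]
  rw [Filter.eventuallyEq_set]
  have h1 : ∀ᵐ y : (Fin d → ℝ), y ∉ (Set.univ.pi fun _ : Fin d => Set.Icc (-(1/2) : ℝ) (1/2)) \ cubeIoo d :=
    (measure_eq_zero_iff_ae_notMem (μ := volume)).1 hdiff
  filter_upwards [h1] with y hy
  constructor
  · intro hyc
    by_contra hoo
    exact hy ⟨hsubIcc hyc, hoo⟩
  · intro hyo; exact hsub1 hyo

lemma mem_cell_iff {n : ℕ} (hn : 1 ≤ n) {k : Fin d → ℤ} {y : Fin d → ℝ} :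
    y ∈ cell d n k ↔ ∀ i, ⌊(n : ℝ) * y i⌋ = k i := by
  have hn0 : (0 : ℝ) < n := by exact_mod_cast hn
  constructor
  · intro hy i
    have h := hy i (Set.mem_univ i)
    obtain ⟨h1, h2⟩ := h
    rw [Int.floor_eq_iff]
    constructor
    · calc (k i : ℝ) = (k i : ℝ) / n * n := by field_simp
        _ ≤ y i * n := by exact mul_le_mul_of_nonneg_right h1 hn0.le
        _ = (n : ℝ) * y i := mul_comm _ _
    · calc (n : ℝ) * y i = y i * n := mul_comm _ _
        _ < ((k i : ℝ) + 1) / n * n := by exact mul_lt_mul_of_pos_right h2 hn0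
        _ = (k i : ℝ) + 1 := by field_simp
  · intro h i _
    have h1 := Int.floor_le ((n : ℝ) * y i)
    have h2 := Int.lt_floor_add_one ((n : ℝ) * y i)
    rw [h i] at h1 h2
    constructor
    · rw [div_le_iff₀ hn0]; linarith [mul_comm (y i) (n:ℝ)]
    · rw [lt_div_iff₀ hn0]; linarith [mul_comm (y i) (n:ℝ)]

lemma indicator_cell_eq {n : ℕ} (hn : 1 ≤ n) (k : Fin d → ℤ) (g : (Fin d → ℝ) → ℝ) (y : Fin d → ℝ) :
    (cell d n k).indicator (fun y => g (T d n y)) y =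
      (cubeIoc d).indicator g ((fun i => 1/2 + (k i : ℝ)) + (-(n : ℝ)) • y) := by
  have hn0 : (0 : ℝ) < n := by exact_mod_cast hn
  have hmem : y ∈ cell d n k ↔ ((fun i => 1/2 + (k i : ℝ)) + (-(n : ℝ)) • y) ∈ cubeIoc d := by
    rw [mem_cell_iff hn]
    constructor
    · intro h i _
      have h1 := Int.floor_le ((n : ℝ) * y i)
      have h2 := Int.lt_floor_add_one ((n : ℝ) * y i)
      rw [h i] at h1 h2
      simp only [Pi.add_apply, Pi.smul_apply, smul_eq_mul]
      constructor <;> [skip; skip] <;> nlinarith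
    · intro h i
      have h' := h i (Set.mem_univ i)
      simp only [Pi.add_apply, Pi.smul_apply, smul_eq_mul] at h'
      rw [Int.floor_eq_iff]
      constructor <;> nlinarith [h'.1, h'.2]
  by_cases hy : y ∈ cell d n k
  · rw [Set.indicator_of_mem hy, Set.indicator_of_mem (hmem.1 hy)]
    congr 1
    have hfl := (mem_cell_iff hn).1 hy
    funext i
    have : Int.fract ((n : ℝ) * y i) = (n : ℝ) * y i - k i := by
      rw [Int.fract, hfl i]
    simp only [T, roundTheta, Pi.smul_apply, smul_eq_mul, Pi.add_apply]
    rw [this]; ring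
  · rw [Set.indicator_of_notMem hy, Set.indicator_of_notMem (fun h => hy (hmem.2 h))]


lemma cell_integral {n : ℕ} (hn : 1 ≤ n) (k : Fin d → ℤ) (g : (Fin d → ℝ) → ℝ) :
    ∫ y in cell d n k, g (T d n y) = ((n : ℝ) ^ d)⁻¹ * ∫ v in cubeIoc d, g v := by
  have hn0 : (0 : ℝ) < n := by exact_mod_cast hn
  rw [← integral_indicator (measurableSet_cell n k)]
  have : (fun y => (cell d n k).indicator (fun y => g (T d n y)) y) =
      fun y => (fun x => (cubeIoc d).indicator g ((fun i => 1/2 + (k i : ℝ)) + x)) ((-(n:ℝ)) • y) := by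
    funext y
    exact indicator_cell_eq hn k g y
  rw [show (∫ y, (cell d n k).indicator (fun y => g (T d n y)) y) =
      ∫ y, (fun x => (cubeIoc d).indicator g ((fun i => 1/2 + (k i : ℝ)) + x)) ((-(n:ℝ)) • y) from by
    rw [this]]
  rw [MeasureTheory.Measure.integral_comp_smul volume
    (fun x => (cubeIoc d).indicator g ((fun i => 1/2 + (k i : ℝ)) + x)) (-(n:ℝ))]
  rw [MeasureTheory.integral_add_left_eq_self _ (fun i => 1/2 + (k i : ℝ))]
  rw [integral_indicator measurableSet_cubeIoc]
  have hrank : Module.finrank ℝ (Fin d → ℝ) = d := by simp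
  rw [hrank]
  have : |((-(n:ℝ)) ^ d)⁻¹| = ((n:ℝ) ^ d)⁻¹ := by
    rw [abs_inv, abs_pow, abs_neg, abs_of_pos hn0]
  rw [this, smul_eq_mul]

lemma volume_cell {n : ℕ} (hn : 1 ≤ n) (k : Fin d → ℤ) :
    volume (cell d n k) = ENNReal.ofReal (((n : ℝ) ^ d)⁻¹) := by
  have hn0 : (0 : ℝ) < n := by exact_mod_cast hn
  rw [cell, volume_pi_pi]
  have : ∀ i : Fin d, volume (Set.Ico ((k i : ℝ) / n) (((k i : ℝ) + 1) / n)) =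
      ENNReal.ofReal ((n:ℝ)⁻¹) := by
    intro i
    rw [Real.volume_Ico]
    congr 1
    field_simp
    ring
  simp only [this]
  rw [Finset.prod_const, ← ENNReal.ofReal_pow (by positivity), Finset.card_univ, Fintype.card_fin,
    inv_pow]

lemma volume_cell_lt_top {n : ℕ} (hn : 1 ≤ n) (k : Fin d → ℤ) : volume (cell d n k) < ⊤ := by
  rw [volume_cell hn k]; exact ENNReal.ofReal_lt_top

lemma volume_cell_toReal {n : ℕ} (hn : 1 ≤ n) (k : Fin d → ℤ) :
    (volume (cell d n k)).toReal = ((n : ℝ) ^ d)⁻¹ := by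
  have hn0 : (0 : ℝ) < n := by exact_mod_cast hn
  rw [volume_cell hn k, ENNReal.toReal_ofReal (by positivity)]


lemma integrable_mul_comp_T {φ g : (Fin d → ℝ) → ℝ} (hφ : Integrable φ) (hg : Measurable g)
    {M : ℝ} (hgb : ∀ v, |g v| ≤ M) (n : ℕ) :
    Integrable (fun y => φ y * g (T d n y)) := by
  have := hφ.bdd_mul (c := M) ((hg.comp (measurable_T n)).aestronglyMeasurable)
    (Eventually.of_forall fun y => by simpa using hgb (T d n y))
  simpa [mul_comm] using this

lemma norm_setIntegral_cube_le {g : (Fin d → ℝ) → ℝ} {M : ℝ} (hgb : ∀ v, |g v| ≤ M) :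
    |∫ v in cubeIoc d, g v| ≤ M := by
  have h := norm_setIntegral_le_of_norm_le_const (μ := volume) (s := cubeIoc d)
    (by rw [volume_cubeIoc]; exact ENNReal.one_lt_top) (C := M)
    (fun x _ => by rw [Real.norm_eq_abs]; exact hgb x)
  rw [measureReal_def, volume_cubeIoc, ENNReal.toReal_one, mul_one, Real.norm_eq_abs] at h
  exact h

lemma tendsto_integral_mul_T_of_cont {φ g : (Fin d → ℝ) → ℝ} (hφc : Continuous φ)
    (hφs : HasCompactSupport φ) (hg : Measurable g) {M : ℝ} (hM : 0 ≤ M)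
    (hgb : ∀ v, |g v| ≤ M) :
    Tendsto (fun n : ℕ => ∫ y, φ y * g (T d n y)) atTop
      (𝓝 ((∫ y, φ y) * ∫ v in cubeIoc d, g v)) := by
  have hφint : Integrable φ := hφc.integrable_of_hasCompactSupport hφs
  obtain ⟨R0, hR0⟩ := hφs.isBounded.subset_closedBall 0
  set R : ℝ := max R0 0 with hRdef
  have hR : 0 ≤ R := le_max_right _ _
  have hRsupp : ∀ y ∈ tsupport φ, ∀ i, |y i| ≤ R := by
    intro y hy i
    have h1 : ‖y‖ ≤ R0 := by simpa [dist_zero_right] using hR0 hy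
    exact le_trans (le_trans (norm_le_pi_norm y i) h1) (le_max_left _ _)
  rw [Metric.tendsto_atTop]
  intro ε hε
  set Cd : ℝ := (2 * R + 3) ^ d with hCd
  have hCdpos : 0 < Cd := by positivity
  set ε' : ℝ := ε / (2 * (M + 1) * Cd) with hε'def
  have hε' : 0 < ε' := by positivity
  have hφu := hφs.uniformContinuous_of_continuous hφc
  obtain ⟨δ, hδ, hδ'⟩ := Metric.uniformContinuous_iff.1 hφu ε' hε'
  refine ⟨max 1 ⌈1 / δ⌉₊, fun n hn => ?_⟩
  have hn1 : 1 ≤ n := le_trans (le_max_left _ _) hn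
  have hn0 : (0 : ℝ) < n := by exact_mod_cast hn1
  have hinvn : 1 / (n : ℝ) ≤ δ := by
    have h1 : (⌈1 / δ⌉₊ : ℝ) ≤ n := by
      exact_mod_cast le_trans (le_max_right 1 ⌈1 / δ⌉₊) hn
    have h2 : 1 / δ ≤ (n : ℝ) := le_trans (Nat.le_ceil _) h1
    rw [div_le_iff₀ hn0]
    rw [div_le_iff₀ hδ] at h2
    linarith [mul_comm δ (n : ℝ)]
  set N : ℕ := ⌈R * n⌉₊ with hNdef
  set K : Finset (Fin d → ℤ) := Fintype.piFinset fun _ => Finset.Icc (-(N : ℤ)) (N : ℤ) with hK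
  -- support inclusion
  have hsupp : ∀ y ∈ tsupport φ, y ∈ ⋃ k ∈ K, cell d n k := by
    intro y hy
    refine Set.mem_biUnion (show (fun i => ⌊(n : ℝ) * y i⌋) ∈ K from ?_)
      ((mem_cell_iff hn1).2 fun i => rfl)
    rw [hK, Fintype.mem_piFinset]
    intro i
    have hyi := hRsupp y hy i
    have hRN : R * n ≤ N := Nat.le_ceil _
    rw [Finset.mem_Icc]
    constructor
    · rw [Int.le_floor]
      push_cast
      nlinarith [abs_le.1 hyi]
    · have h1 : (n : ℝ) * y i ≤ (N : ℝ) := by nlinarith [abs_le.1 hyi]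
      exact_mod_cast le_trans (Int.floor_le_floor h1) (le_of_eq (by exact_mod_cast Int.floor_intCast (N : ℤ)))
  have hUmeas : MeasurableSet (⋃ k ∈ K, cell d n k) :=
    K.measurableSet_biUnion fun k _ => measurableSet_cell n k
  have hdisj : (K : Set (Fin d → ℤ)).Pairwise (Function.onFun Disjoint (cell d n)) := by
    intro k _ k' _ hkk'
    rw [Function.onFun, Set.disjoint_left]
    intro y hy hy'
    exact hkk' (funext fun i => ((mem_cell_iff hn1).1 hy i).symm.trans ((mem_cell_iff hn1).1 hy' i))
  -- decomposition of both integrals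
  have hdecomp : ∀ f : (Fin d → ℝ) → ℝ, Integrable f → (∀ y, f y ≠ 0 → y ∈ tsupport φ) →
      ∫ y, f y = ∑ k ∈ K, ∫ y in cell d n k, f y := by
    intro f hf hsup
    have h1 : f = (⋃ k ∈ K, cell d n k).indicator f := by
      refine (Set.indicator_eq_self.2 ?_).symm
      intro y hy
      exact hsupp y (hsup y hy)
    calc ∫ y, f y = ∫ y, (⋃ k ∈ K, cell d n k).indicator f y := by rw [← h1]
      _ = ∫ y in ⋃ k ∈ K, cell d n k, f y := integral_indicator hUmeas
      _ = ∑ k ∈ K, ∫ y in cell d n k, f y :=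
        integral_biUnion_finset K (fun k _ => measurableSet_cell n k) hdisj
          (fun k _ => hf.integrableOn)
  have hA := hdecomp (fun y => φ y * g (T d n y)) (integrable_mul_comp_T hφint hg hgb n)
    (fun y hy => subset_tsupport φ (fun h => hy (by simp [h])))
  have hB := hdecomp φ hφint (fun y hy => subset_tsupport φ hy)
  -- per-cell estimate
  have hgTint : ∀ k : Fin d → ℤ, IntegrableOn (fun y => g (T d n y)) (cell d n k) := by
    intro k
    refine Integrable.mono' (g := fun _ => M)
      (integrableOn_const (C := M) (volume_cell_lt_top hn1 k).ne)
      ((hg.comp (measurable_T n)).aestronglyMeasurable) ?_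
    exact Eventually.of_forall fun y => by rw [Real.norm_eq_abs]; exact hgb _
  have hIg : |∫ v in cubeIoc d, g v| ≤ M := norm_setIntegral_cube_le hgb
  have hkey : ∀ k ∈ K, |(∫ y in cell d n k, φ y * g (T d n y)) -
      (∫ y in cell d n k, φ y) * ∫ v in cubeIoc d, g v| ≤ 2 * M * ε' * ((n : ℝ) ^ d)⁻¹ := by
    intro k _
    set c : Fin d → ℝ := fun i => (k i : ℝ) / n with hc
    have hcmem : c ∈ cell d n k := by
      intro i _
      refine ⟨le_refl _, ?_⟩
      rw [div_lt_div_iff₀ hn0 hn0]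
      nlinarith
    have hclose : ∀ y ∈ cell d n k, |φ y - φ c| ≤ ε' := by
      intro y hy
      have hdist : dist y c < δ := by
        rw [dist_pi_lt_iff hδ]
        intro i
        have h1 := hy i (Set.mem_univ i)
        have h2 : ((k i : ℝ) + 1) / n = (k i : ℝ) / n + 1 / n := by ring
        rw [Real.dist_eq, abs_of_nonneg (sub_nonneg.2 h1.1)]
        have h3 := h1.2
        rw [h2] at h3
        by_cases hlt : (1 : ℝ) / n < δ
        · linarith
        · push_neg at hlt
          have : (1 : ℝ) / n = δ := le_antisymm hinvn hlt
          linarith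
      have := hδ' hdist
      rw [Real.dist_eq] at this
      exact this.le
    have I1 : IntegrableOn (fun y => φ y * g (T d n y)) (cell d n k) :=
      (integrable_mul_comp_T hφint hg hgb n).integrableOn
    have I2 : IntegrableOn (fun y => φ c * g (T d n y)) (cell d n k) :=
      (hgTint k).const_mul (φ c)
    have e1 : ∫ y in cell d n k, (φ y - φ c) * g (T d n y) =
        (∫ y in cell d n k, φ y * g (T d n y)) - φ c * (((n : ℝ) ^ d)⁻¹ * ∫ v in cubeIoc d, g v) := by
      have : ∀ y, (φ y - φ c) * g (T d n y) = φ y * g (T d n y) - φ c * g (T d n y) := by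
        intro y; ring
      simp_rw [this]
      rw [integral_sub I1 I2, integral_const_mul, cell_integral hn1 k g]
    have e2 : ∫ y in cell d n k, (φ y - φ c) =
        (∫ y in cell d n k, φ y) - φ c * ((n : ℝ) ^ d)⁻¹ := by
      rw [integral_sub hφint.integrableOn
        (integrableOn_const (C := φ c) (volume_cell_lt_top hn1 k).ne), setIntegral_const,
        measureReal_def, volume_cell_toReal hn1 k, smul_eq_mul, mul_comm]
    have E1 : |∫ y in cell d n k, (φ y - φ c) * g (T d n y)| ≤ (ε' * M) * ((n : ℝ) ^ d)⁻¹ := by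
      have h := norm_setIntegral_le_of_norm_le_const (volume_cell_lt_top hn1 k)
        (C := ε' * M) (f := fun y => (φ y - φ c) * g (T d n y))
        (fun y hy => by
          rw [Real.norm_eq_abs, abs_mul]
          exact mul_le_mul (hclose y hy) (hgb _) (abs_nonneg _) hε'.le)
      rw [measureReal_def, volume_cell_toReal hn1 k] at h
      exact h
    have E2 : |(∫ y in cell d n k, φ y) - φ c * ((n : ℝ) ^ d)⁻¹| ≤ ε' * ((n : ℝ) ^ d)⁻¹ := by
      rw [← e2]
      have h := norm_setIntegral_le_of_norm_le_const (volume_cell_lt_top hn1 k)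
        (C := ε') (f := fun y => φ y - φ c)
        (fun y hy => by rw [Real.norm_eq_abs]; exact hclose y hy)
      rw [measureReal_def, volume_cell_toReal hn1 k] at h
      exact h
    have split : (∫ y in cell d n k, φ y * g (T d n y)) -
        (∫ y in cell d n k, φ y) * ∫ v in cubeIoc d, g v =
        (∫ y in cell d n k, (φ y - φ c) * g (T d n y)) -
        ((∫ y in cell d n k, φ y) - φ c * ((n : ℝ) ^ d)⁻¹) * ∫ v in cubeIoc d, g v := by
      rw [e1]; ring
    rw [split]
    calc |(∫ y in cell d n k, (φ y - φ c) * g (T d n y)) -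
        ((∫ y in cell d n k, φ y) - φ c * ((n : ℝ) ^ d)⁻¹) * ∫ v in cubeIoc d, g v|
        ≤ |∫ y in cell d n k, (φ y - φ c) * g (T d n y)| +
          |(∫ y in cell d n k, φ y) - φ c * ((n : ℝ) ^ d)⁻¹| * |∫ v in cubeIoc d, g v| := by
          rw [← abs_mul]; exact abs_sub _ _
      _ ≤ (ε' * M) * ((n : ℝ) ^ d)⁻¹ + (ε' * ((n : ℝ) ^ d)⁻¹) * M := by
          refine add_le_add E1 (mul_le_mul E2 hIg (abs_nonneg _) ?_)
          positivity
      _ = 2 * M * ε' * ((n : ℝ) ^ d)⁻¹ := by ring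
  -- assemble
  have hcard : (K.card : ℝ) = ((2 * N + 1 : ℕ) : ℝ) ^ d := by
    rw [hK, Fintype.card_piFinset]
    have hIcc : (Finset.Icc (-(N : ℤ)) (N : ℤ)).card = 2 * N + 1 := by
      rw [Int.card_Icc]; omega
    simp only [hIcc, Finset.prod_const, Finset.card_univ, Fintype.card_fin]
    push_cast
    ring
  have hNle : ((2 * N + 1 : ℕ) : ℝ) ≤ (2 * R + 3) * n := by
    have h1 : (N : ℝ) < R * n + 1 := Nat.ceil_lt_add_one (by positivity)
    have hn1real : (1 : ℝ) ≤ n := by exact_mod_cast hn1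
    push_cast
    nlinarith [h1, hR, hn1real]
  have hfrac : ((2 * N + 1 : ℕ) : ℝ) ^ d * ((n : ℝ) ^ d)⁻¹ ≤ Cd := by
    rw [hCd, ← div_eq_mul_inv, ← div_pow]
    refine pow_le_pow_left₀ (by positivity) ?_ d
    rw [div_le_iff₀ hn0]
    exact hNle
  rw [Real.dist_eq, hA, hB, Finset.sum_mul, ← Finset.sum_sub_distrib]
  calc |∑ k ∈ K, ((∫ y in cell d n k, φ y * g (T d n y)) -
        (∫ y in cell d n k, φ y) * ∫ v in cubeIoc d, g v)|
      ≤ ∑ k ∈ K, |(∫ y in cell d n k, φ y * g (T d n y)) -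
        (∫ y in cell d n k, φ y) * ∫ v in cubeIoc d, g v| := Finset.abs_sum_le_sum_abs _ _
    _ ≤ ∑ _k ∈ K, 2 * M * ε' * ((n : ℝ) ^ d)⁻¹ := Finset.sum_le_sum hkey
    _ = (K.card : ℝ) * (2 * M * ε' * ((n : ℝ) ^ d)⁻¹) := by
        rw [Finset.sum_const, nsmul_eq_mul]
    _ = (2 * M * ε') * (((2 * N + 1 : ℕ) : ℝ) ^ d * ((n : ℝ) ^ d)⁻¹) := by
        rw [hcard]; ring
    _ ≤ (2 * M * ε') * Cd := by
        refine mul_le_mul_of_nonneg_left hfrac (by positivity)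
    _ < ε := by
        have key2 : 2 * M * ε' * Cd = ε * (M / (M + 1)) := by
          rw [hε'def]
          field_simp
        rw [key2]
        have : M / (M + 1) < 1 := by
          rw [div_lt_one (by linarith)]
          linarith
        nlinarith

lemma tendsto_integral_mul_T {φ g : (Fin d → ℝ) → ℝ} (hφ : Integrable φ) (hg : Measurable g)
    {M : ℝ} (hM : 0 ≤ M) (hgb : ∀ v, |g v| ≤ M) :
    Tendsto (fun n : ℕ => ∫ y, φ y * g (T d n y)) atTop
      (𝓝 ((∫ y, φ y) * ∫ v in cubeIoc d, g v)) := by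
  rw [Metric.tendsto_atTop]
  intro ε hε
  have hM1 : (0 : ℝ) < M + 1 := by linarith
  obtain ⟨φ', hφ's, hφ'near, hφ'c, hφ'int⟩ :=
    hφ.exists_hasCompactSupport_integral_sub_le (show (0:ℝ) < ε/(4*(M+1)) by positivity)
  have base := tendsto_integral_mul_T_of_cont hφ'c hφ's hg hM hgb
  rw [Metric.tendsto_atTop] at base
  obtain ⟨n₀, hn₀⟩ := base (ε/4) (by positivity)
  refine ⟨n₀, fun n hn => ?_⟩
  have hIg : |∫ v in cubeIoc d, g v| ≤ M := norm_setIntegral_cube_le hgb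
  have hnorm : ∫ y, |φ y - φ' y| ≤ ε/(4*(M+1)) := by
    simpa [Real.norm_eq_abs] using hφ'near
  have hsubint : Integrable (fun y => φ y - φ' y) := hφ.sub hφ'int
  have hd1 : ∀ n : ℕ, |(∫ y, φ y * g (T d n y)) - ∫ y, φ' y * g (T d n y)| ≤ ε/4 := by
    intro n
    have e : (∫ y, φ y * g (T d n y)) - ∫ y, φ' y * g (T d n y)
        = ∫ y, (φ y - φ' y) * g (T d n y) := by
      rw [← integral_sub (integrable_mul_comp_T hφ hg hgb n)
        (integrable_mul_comp_T hφ'int hg hgb n)]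
      congr 1; funext y; ring
    rw [e]
    have h1 : |∫ y, (φ y - φ' y) * g (T d n y)| ≤ ∫ y, |φ y - φ' y| * M := by
      refine le_trans (by simpa [Real.norm_eq_abs] using
        norm_integral_le_integral_norm (fun y => (φ y - φ' y) * g (T d n y))) ?_
      have hgabs : ∀ v, |(|g v|)| ≤ M := fun v => by rw [abs_abs]; exact hgb v
      refine integral_mono (integrable_mul_comp_T hsubint.abs hg.abs hgabs n)
        (hsubint.abs.mul_const M) ?_
      intro y
      exact mul_le_mul_of_nonneg_left (hgb _) (abs_nonneg _)
    refine le_trans h1 ?_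
    rw [integral_mul_const]
    calc (∫ y, |φ y - φ' y|) * M ≤ (ε/(4*(M+1))) * M := by
          refine mul_le_mul_of_nonneg_right hnorm hM
      _ ≤ ε/4 := by
          rw [div_mul_eq_mul_div, div_le_div_iff₀ (by positivity) (by positivity)]
          nlinarith
  have hd2 : |(∫ y, φ y) * (∫ v in cubeIoc d, g v) - (∫ y, φ' y) * ∫ v in cubeIoc d, g v| ≤ ε/4 := by
    rw [← sub_mul, abs_mul, ← integral_sub hφ hφ'int]
    have h1 : |∫ y, (φ y - φ' y)| ≤ ∫ y, |φ y - φ' y| := by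
      simpa [Real.norm_eq_abs] using norm_integral_le_integral_norm (fun y => φ y - φ' y)
    calc |∫ y, (φ y - φ' y)| * |∫ v in cubeIoc d, g v| ≤ (ε/(4*(M+1))) * M := by
          refine mul_le_mul (le_trans h1 hnorm) hIg (abs_nonneg _) (by positivity)
      _ ≤ ε/4 := by
          rw [div_mul_eq_mul_div, div_le_div_iff₀ (by positivity) (by positivity)]
          nlinarith
  have hb := hn₀ n hn
  rw [Real.dist_eq] at hb ⊢
  calc |(∫ y, φ y * g (T d n y)) - (∫ y, φ y) * ∫ v in cubeIoc d, g v|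
      ≤ |(∫ y, φ y * g (T d n y)) - ∫ y, φ' y * g (T d n y)|
        + |(∫ y, φ' y * g (T d n y)) - (∫ y, φ' y) * ∫ v in cubeIoc d, g v|
        + |(∫ y, φ' y) * (∫ v in cubeIoc d, g v) - (∫ y, φ y) * ∫ v in cubeIoc d, g v| := by
        have t1 := abs_sub_le (∫ y, φ y * g (T d n y)) (∫ y, φ' y * g (T d n y))
          ((∫ y, φ y) * ∫ v in cubeIoc d, g v)
        have t2 := abs_sub_le (∫ y, φ' y * g (T d n y)) ((∫ y, φ' y) * ∫ v in cubeIoc d, g v)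
          ((∫ y, φ y) * ∫ v in cubeIoc d, g v)
        linarith
    _ < ε := by
        have := hd1 n
        have h2 : |(∫ y, φ' y) * (∫ v in cubeIoc d, g v) - (∫ y, φ y) * ∫ v in cubeIoc d, g v|
            ≤ ε / 4 := by rw [abs_sub_comm]; exact hd2
        linarith

lemma tendsto_setIntegral_comp_T {Ω : Type*} [MeasurableSpace Ω] (P : Measure Ω)
    [IsProbabilityMeasure P] {Y : Ω → (Fin d → ℝ)} (hY : Measurable Y)
    (hac : P.map Y ≪ (volume : Measure (Fin d → ℝ)))
    {A : Set Ω} (hA : MeasurableSet A) {g : (Fin d → ℝ) → ℝ} (hg : Measurable g)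
    {M : ℝ} (hM : 0 ≤ M) (hgb : ∀ v, |g v| ≤ M) :
    Tendsto (fun n : ℕ => ∫ ω in A, g (T d n (Y ω)) ∂P) atTop
      (𝓝 ((P A).toReal * ∫ v in cubeIoc d, g v)) := by
  set ν : Measure (Fin d → ℝ) := (P.restrict A).map Y with hν
  haveI : IsFiniteMeasure ν := by
    constructor
    rw [hν, Measure.map_apply hY MeasurableSet.univ, Set.preimage_univ,
      Measure.restrict_apply_univ]
    exact measure_lt_top _ _
  have hνac : ν ≪ (volume : Measure (Fin d → ℝ)) := by
    refine Measure.AbsolutelyContinuous.mk fun s hs h0 => ?_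
    have h1 : P.map Y s = 0 := hac h0
    rw [Measure.map_apply hY hs] at h1
    rw [hν, Measure.map_apply hY hs, Measure.restrict_apply (hY hs)]
    exact le_antisymm (le_trans (measure_mono Set.inter_subset_left) h1.le) (by positivity)
  set f : (Fin d → ℝ) → ℝ := fun y => (ν.rnDeriv volume y).toReal with hf
  have hfmeas : Measurable f := (Measure.measurable_rnDeriv ν volume).ennreal_toReal
  have hfint : Integrable f volume := Measure.integrable_toReal_rnDeriv
  have hids : ∀ n : ℕ, ∫ ω in A, g (T d n (Y ω)) ∂P = ∫ y, f y * g (T d n y) := by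
    intro n
    have h1 : ∫ ω in A, g (T d n (Y ω)) ∂P = ∫ y, g (T d n y) ∂ν := by
      rw [hν, integral_map (f := fun y => g (T d n y)) hY.aemeasurable
        (((hg.comp (measurable_T n)).aestronglyMeasurable) :
          AEStronglyMeasurable (fun y => g (T d n y)) _)]
    rw [h1, ← MeasureTheory.integral_rnDeriv_smul hνac]
    simp only [smul_eq_mul, hf]
  have hfmain := tendsto_integral_mul_T hfint hg hM hgb
  have hftot : ∫ y, f y = (P A).toReal := by
    rw [hf, Measure.integral_toReal_rnDeriv hνac, measureReal_def, hν,
      Measure.map_apply hY MeasurableSet.univ, Set.preimage_univ, Measure.restrict_apply_univ]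
  rw [hftot] at hfmain
  exact hfmain.congr fun n => (hids n).symm

lemma integral_eq_sum_fibers {Ω E' : Type*} [MeasurableSpace Ω] [MeasurableSpace E']
    (P : Measure Ω) [IsFiniteMeasure P] (s : SimpleFunc Ω E') {f : Ω → ℝ}
    (hf : Integrable f P) :
    ∫ ω, f ω ∂P = ∑ c ∈ s.range, ∫ ω in s ⁻¹' {c}, f ω ∂P := by
  have hU : (⋃ c ∈ s.range, s ⁻¹' {c}) = Set.univ := by
    ext ω
    simp only [Set.mem_iUnion, Set.mem_preimage, Set.mem_singleton_iff, Set.mem_univ, iff_true]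
    exact ⟨s ω, s.mem_range_self ω, rfl⟩
  rw [← setIntegral_univ, ← hU, integral_biUnion_finset s.range
    (fun c _ => s.measurableSet_fiber c) ?_ (fun c _ => hf.integrableOn)]
  intro c _ c' _ hcc'
  rw [Function.onFun, Set.disjoint_left]
  intro ω hω hω'
  rw [Set.mem_preimage, Set.mem_singleton_iff] at hω hω'
  exact hcc' (hω.symm.trans hω')

section Envelope

variable {E : Type*} [MetricSpace E] [Nonempty E]

noncomputable def env (F : E →ᵇ ℝ) (K : ℕ) (z : E) : ℝ := ⨅ w : E, (F w + K * dist z w)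

lemma env_bddBelow (F : E →ᵇ ℝ) (K : ℕ) (z : E) :
    BddBelow (Set.range fun w => F w + K * dist z w) := by
  refine ⟨-‖F‖, fun x hx => ?_⟩
  obtain ⟨w, rfl⟩ := hx
  have h1 : |F w| ≤ ‖F‖ := by
    rw [← Real.norm_eq_abs]; exact F.norm_coe_le_norm w
  have := abs_le.1 h1
  show -‖F‖ ≤ F w + K * dist z w
  nlinarith [dist_nonneg (x := z) (y := w), this.1,
    mul_nonneg (show (0:ℝ) ≤ K by positivity) (dist_nonneg (x := z) (y := w))]

lemma env_le (F : E →ᵇ ℝ) (K : ℕ) (z : E) : env F K z ≤ F z := by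
  have := ciInf_le (env_bddBelow F K z) z
  simpa [env] using this

lemma neg_norm_le_env (F : E →ᵇ ℝ) (K : ℕ) (z : E) : -‖F‖ ≤ env F K z := by
  refine le_ciInf fun w => ?_
  have h1 : |F w| ≤ ‖F‖ := by
    rw [← Real.norm_eq_abs]; exact F.norm_coe_le_norm w
  have := abs_le.1 h1
  nlinarith [dist_nonneg (x := z) (y := w), this.1,
    mul_nonneg (show (0:ℝ) ≤ K by positivity) (dist_nonneg (x := z) (y := w))]

lemma abs_env_le (F : E →ᵇ ℝ) (K : ℕ) (z : E) : |env F K z| ≤ ‖F‖ := by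
  rw [abs_le]
  refine ⟨neg_norm_le_env F K z, le_trans (env_le F K z) ?_⟩
  have h1 : |F z| ≤ ‖F‖ := by rw [← Real.norm_eq_abs]; exact F.norm_coe_le_norm z
  exact (abs_le.1 h1).2

lemma env_lipschitz (F : E →ᵇ ℝ) (K : ℕ) : LipschitzWith (K : ℝ≥0) (env F K) := by
  refine LipschitzWith.of_dist_le_mul fun z z' => ?_
  have key : ∀ a b : E, env F K a ≤ env F K b + K * dist a b := by
    intro a b
    rw [← sub_le_iff_le_add]
    refine le_ciInf fun w => ?_
    have h1 : env F K a ≤ F w + K * dist a w := ciInf_le (env_bddBelow F K a) w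
    have h2 : dist a w ≤ dist a b + dist b w := dist_triangle a b w
    have hK : (0 : ℝ) ≤ K := Nat.cast_nonneg K
    nlinarith
  rw [Real.dist_eq, abs_sub_le_iff]
  constructor
  · have := key z z'; push_cast; linarith
  · have := key z' z; rw [dist_comm] at this; push_cast; linarith

lemma env_tendsto (F : E →ᵇ ℝ) (z : E) :
    Tendsto (fun K : ℕ => env F K z) atTop (𝓝 (F z)) := by
  rw [Metric.tendsto_atTop]
  intro ε hε
  obtain ⟨δ, hδ, hδ'⟩ := Metric.continuous_iff.1 F.continuous z (ε/2) (by positivity)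
  refine ⟨⌈2 * ‖F‖ / δ⌉₊, fun K hK => ?_⟩
  have hKδ : 2 * ‖F‖ ≤ K * δ := by
    have h1 : (2 * ‖F‖ / δ) ≤ (K : ℝ) := le_trans (Nat.le_ceil _) (by exact_mod_cast hK)
    rw [div_le_iff₀ hδ] at h1
    exact h1
  have hlow : F z - ε/2 ≤ env F K z := by
    refine le_ciInf fun w => ?_
    by_cases hw : dist w z < δ
    · have := hδ' w hw
      rw [Real.dist_eq] at this
      have h2 := (abs_le.1 this.le).1
      nlinarith [dist_nonneg (x := z) (y := w),
        mul_nonneg (show (0:ℝ) ≤ K by positivity) (dist_nonneg (x := z) (y := w))]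
    · push_neg at hw
      have h1 : |F w| ≤ ‖F‖ := by rw [← Real.norm_eq_abs]; exact F.norm_coe_le_norm w
      have h2 : |F z| ≤ ‖F‖ := by rw [← Real.norm_eq_abs]; exact F.norm_coe_le_norm z
      have h3 : δ ≤ dist z w := by rw [dist_comm]; exact hw
      have hK0 : (0 : ℝ) ≤ (K : ℝ) := by positivity
      nlinarith [(abs_le.1 h1).1, (abs_le.1 h2).2, mul_le_mul_of_nonneg_left h3 hK0]
  rw [Real.dist_eq, abs_lt]
  constructor
  · linarith
  · have := env_le F K z
    linarith

end Envelope

lemma tendsto_of_lipschitz {Ω : Type*} [MeasurableSpace Ω] (P : Measure Ω)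
    [IsProbabilityMeasure P] {m : ℕ} {Y : Ω → (Fin d → ℝ)} {X : Ω → (Fin m → ℝ)}
    (hY : Measurable Y) (hX : Measurable X)
    (hac : P.map Y ≪ (volume : Measure (Fin d → ℝ)))
    {ψ : (Fin d → ℝ) → ℝ} (hψmeas : Measurable ψ)
    (H : ((Fin m → ℝ) × ℝ) → ℝ) (hHc : Continuous H) {L : ℝ≥0} (hHl : LipschitzWith L H)
    {C : ℝ} (hC : 0 ≤ C) (hHb : ∀ z, |H z| ≤ C) :
    Tendsto (fun n : ℕ => ∫ ω, H (X ω, ψ (T d n (Y ω))) ∂P) atTop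
      (𝓝 (∫ ω, (∫ v in cubeIoc d, H (X ω, ψ v)) ∂P)) := by
  have hgmeas : ∀ c : Fin m → ℝ, Measurable (fun v => H (c, ψ v)) :=
    fun c => hHc.measurable.comp (measurable_const.prodMk hψmeas)
  have hΦsm : StronglyMeasurable (fun x : Fin m → ℝ => ∫ v in cubeIoc d, H (x, ψ v)) := by
    have hf : StronglyMeasurable (fun p : (Fin m → ℝ) × (Fin d → ℝ) => H (p.1, ψ p.2)) :=
      (hHc.measurable.comp (measurable_fst.prodMk (hψmeas.comp measurable_snd))).stronglyMeasurable
    exact hf.integral_prod_right'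
  have hΦb : ∀ x : Fin m → ℝ, |∫ v in cubeIoc d, H (x, ψ v)| ≤ C :=
    fun x => norm_setIntegral_cube_le (fun v => hHb _)
  have hint1 : ∀ (Z : Ω → Fin m → ℝ), Measurable Z → ∀ n : ℕ,
      Integrable (fun ω => H (Z ω, ψ (T d n (Y ω)))) P := by
    intro Z hZ n
    refine Integrable.mono' (integrable_const C)
      (hHc.measurable.comp (hZ.prodMk (hψmeas.comp ((measurable_T n).comp hY)))).aestronglyMeasurable
      (Eventually.of_forall fun ω => by rw [Real.norm_eq_abs]; exact hHb _)
  have hint2 : ∀ (Z : Ω → Fin m → ℝ), Measurable Z →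
      Integrable (fun ω => ∫ v in cubeIoc d, H (Z ω, ψ v)) P := by
    intro Z hZ
    refine Integrable.mono' (integrable_const C)
      ((hΦsm.comp_measurable hZ).aestronglyMeasurable)
      (Eventually.of_forall fun ω => by rw [Real.norm_eq_abs]; exact hΦb _)
  -- simple function case
  have hsimple : ∀ s : SimpleFunc Ω (Fin m → ℝ),
      Tendsto (fun n : ℕ => ∫ ω, H (s ω, ψ (T d n (Y ω))) ∂P) atTop
        (𝓝 (∫ ω, (∫ v in cubeIoc d, H (s ω, ψ v)) ∂P)) := by
    intro s
    have hAeq : ∀ n : ℕ, ∫ ω, H (s ω, ψ (T d n (Y ω))) ∂P =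
        ∑ c ∈ s.range, ∫ ω in s ⁻¹' {c}, H (c, ψ (T d n (Y ω))) ∂P := by
      intro n
      rw [integral_eq_sum_fibers P s (hint1 s s.measurable n)]
      refine Finset.sum_congr rfl fun c _ => setIntegral_congr_fun (s.measurableSet_fiber c) ?_
      intro ω hω
      rw [Set.mem_preimage, Set.mem_singleton_iff] at hω
      show H (s ω, ψ (T d n (Y ω))) = H (c, ψ (T d n (Y ω)))
      rw [hω]
    have hBeq : ∫ ω, (∫ v in cubeIoc d, H (s ω, ψ v)) ∂P =
        ∑ c ∈ s.range, (P (s ⁻¹' {c})).toReal * ∫ v in cubeIoc d, H (c, ψ v) := by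
      rw [integral_eq_sum_fibers P s (hint2 s s.measurable)]
      refine Finset.sum_congr rfl fun c _ => ?_
      rw [show ∫ ω in s ⁻¹' {c}, (∫ v in cubeIoc d, H (s ω, ψ v)) ∂P
          = ∫ _ω in s ⁻¹' {c}, (∫ v in cubeIoc d, H (c, ψ v)) ∂P from
        setIntegral_congr_fun (s.measurableSet_fiber c) (fun ω hω => by
          rw [Set.mem_preimage, Set.mem_singleton_iff] at hω
          show (∫ v in cubeIoc d, H (s ω, ψ v)) = ∫ v in cubeIoc d, H (c, ψ v)
          rw [hω])]
      rw [setIntegral_const, measureReal_def, smul_eq_mul]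
    rw [hBeq]
    have hlim := tendsto_finset_sum s.range (fun c _ =>
      tendsto_setIntegral_comp_T P hY hac (s.measurableSet_fiber c) (hgmeas c) hC
        (fun v => hHb _))
    exact hlim.congr fun n => (hAeq n).symm
  -- approximation of X by simple functions
  set Xs : ℕ → SimpleFunc Ω (Fin m → ℝ) :=
    fun j => SimpleFunc.approxOn X hX Set.univ 0 (Set.mem_univ 0) j with hXsdef
  have hXs : ∀ ω, Tendsto (fun j => Xs j ω) atTop (𝓝 (X ω)) := fun ω =>
    SimpleFunc.tendsto_approxOn hX (Set.mem_univ 0) (by simp)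
  set b : ℕ → Ω → ℝ := fun j ω => min (2 * C) ((L : ℝ) * dist (X ω) (Xs j ω)) with hbdef
  have hbnonneg : ∀ j ω, 0 ≤ b j ω := fun j ω =>
    le_min (by linarith) (mul_nonneg (by positivity) dist_nonneg)
  have hbmeas : ∀ j, Measurable (b j) := fun j =>
    measurable_const.min ((hX.dist (Xs j).measurable).const_mul (L : ℝ))
  have hbint : ∀ j, Integrable (b j) P := by
    intro j
    refine Integrable.mono' (integrable_const (2 * C)) (hbmeas j).aestronglyMeasurable
      (Eventually.of_forall fun ω => ?_)
    rw [Real.norm_eq_abs, abs_of_nonneg (hbnonneg j ω)]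
    exact min_le_left _ _
  have hbpt : ∀ j (x : Fin m → ℝ) t ω, |H (X ω, t) - H (Xs j ω, t)| ≤ b j ω := by
    intro j x t ω
    refine le_min ?_ ?_
    · have h1 := hHb (X ω, t)
      have h2 := hHb (Xs j ω, t)
      rw [abs_le] at h1 h2
      rw [abs_le]
      constructor <;> linarith
    · have h := hHl.dist_le_mul (X ω, t) (Xs j ω, t)
      rw [Real.dist_eq] at h
      refine le_trans h ?_
      rw [Prod.dist_eq]
      simp only [dist_self]
      rw [max_eq_left dist_nonneg]
  have hblim : Tendsto (fun j => ∫ ω, b j ω ∂P) atTop (𝓝 0) := by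
    have h0 : (0 : ℝ) = ∫ _ω, (0 : ℝ) ∂P := by simp
    rw [h0]
    refine tendsto_integral_of_dominated_convergence (fun _ => 2 * C)
      (fun j => (hbmeas j).aestronglyMeasurable) (integrable_const _)
      (fun j => Eventually.of_forall fun ω => by
        rw [Real.norm_eq_abs, abs_of_nonneg (hbnonneg j ω)]; exact min_le_left _ _)
      (Eventually.of_forall fun ω => ?_)
    have h1 : Tendsto (fun j => (L : ℝ) * dist (X ω) (Xs j ω)) atTop (𝓝 0) := by
      have := (tendsto_const_nhds : Tendsto (fun _ : ℕ => X ω) atTop (𝓝 (X ω))).dist (hXs ω)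
      rw [dist_self] at this
      simpa using this.const_mul (L : ℝ)
    exact squeeze_zero (fun j => hbnonneg j ω) (fun j => min_le_right _ _) h1
  rw [Metric.tendsto_atTop]
  intro ε hε
  obtain ⟨j, hj⟩ : ∃ j, ∫ ω, b j ω ∂P < ε / 3 := by
    have := (Metric.tendsto_atTop.1 hblim) (ε / 3) (by positivity)
    obtain ⟨j, hjj⟩ := this
    refine ⟨j, ?_⟩
    have := hjj j le_rfl
    rw [Real.dist_eq, sub_zero, abs_of_nonneg (integral_nonneg (hbnonneg j))] at this
    exact this
  have hs := Metric.tendsto_atTop.1 (hsimple (Xs j)) (ε / 3) (by positivity)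
  obtain ⟨n₀, hn₀⟩ := hs
  refine ⟨n₀, fun n hn => ?_⟩
  have hd1 : |(∫ ω, H (X ω, ψ (T d n (Y ω))) ∂P) - ∫ ω, H (Xs j ω, ψ (T d n (Y ω))) ∂P|
      ≤ ∫ ω, b j ω ∂P := by
    rw [← integral_sub (hint1 X hX n) (hint1 (Xs j) (Xs j).measurable n)]
    refine le_trans (by simpa [Real.norm_eq_abs] using
      norm_integral_le_integral_norm (fun ω => H (X ω, ψ (T d n (Y ω))) - H (Xs j ω, ψ (T d n (Y ω))))) ?_
    exact integral_mono ((hint1 X hX n).sub (hint1 (Xs j) (Xs j).measurable n)).abs (hbint j)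
      (fun ω => hbpt j (X ω) _ ω)
  have hd2 : |(∫ ω, (∫ v in cubeIoc d, H (Xs j ω, ψ v)) ∂P) -
      ∫ ω, (∫ v in cubeIoc d, H (X ω, ψ v)) ∂P| ≤ ∫ ω, b j ω ∂P := by
    rw [← integral_sub (hint2 (Xs j) (Xs j).measurable) (hint2 X hX)]
    refine le_trans (by simpa [Real.norm_eq_abs] using
      norm_integral_le_integral_norm (fun ω => (∫ v in cubeIoc d, H (Xs j ω, ψ v)) - ∫ v in cubeIoc d, H (X ω, ψ v))) ?_
    refine integral_mono ((hint2 (Xs j) (Xs j).measurable).sub (hint2 X hX)).abs (hbint j)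
      (fun ω => ?_)
    have e : (∫ v in cubeIoc d, H (Xs j ω, ψ v)) - ∫ v in cubeIoc d, H (X ω, ψ v)
        = ∫ v in cubeIoc d, (H (Xs j ω, ψ v) - H (X ω, ψ v)) := by
      rw [integral_sub]
      · exact Integrable.mono' (integrableOn_const (by rw [volume_cubeIoc]; exact ENNReal.one_ne_top))
          ((hgmeas _).aestronglyMeasurable) (Eventually.of_forall fun v => by
            rw [Real.norm_eq_abs]; exact hHb _)
      · exact Integrable.mono' (integrableOn_const (by rw [volume_cubeIoc]; exact ENNReal.one_ne_top))
          ((hgmeas _).aestronglyMeasurable) (Eventually.of_forall fun v => by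
            rw [Real.norm_eq_abs]; exact hHb _)
    show |(∫ v in cubeIoc d, H (Xs j ω, ψ v)) - ∫ v in cubeIoc d, H (X ω, ψ v)| ≤ b j ω
    rw [e]
    have h := norm_setIntegral_le_of_norm_le_const (μ := volume) (s := cubeIoc d)
      (by rw [volume_cubeIoc]; exact ENNReal.one_lt_top)
      (C := b j ω) (f := fun v => H (Xs j ω, ψ v) - H (X ω, ψ v))
      (fun v _ => by rw [Real.norm_eq_abs, abs_sub_comm]; exact hbpt j (X ω) (ψ v) ω)
    rw [measureReal_def, volume_cubeIoc, ENNReal.toReal_one, mul_one, Real.norm_eq_abs] at h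
    exact h
  have hd3 := hn₀ n hn
  rw [Real.dist_eq] at hd3 ⊢
  have t1 := abs_sub_le (∫ ω, H (X ω, ψ (T d n (Y ω))) ∂P)
    (∫ ω, H (Xs j ω, ψ (T d n (Y ω))) ∂P) (∫ ω, (∫ v in cubeIoc d, H (X ω, ψ v)) ∂P)
  have t2 := abs_sub_le (∫ ω, H (Xs j ω, ψ (T d n (Y ω))) ∂P)
    (∫ ω, (∫ v in cubeIoc d, H (Xs j ω, ψ v)) ∂P) (∫ ω, (∫ v in cubeIoc d, H (X ω, ψ v)) ∂P)
  linarith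

end Stmt8Aux


/-- If the law of `Y` is absolutely continuous w.r.t. Lebesgue measure,
`Y_n = Y + (1/n)θ(nY)`, and `ψ ∈ L¹([−1/2,1/2]^d)`, then `(X, ψ(n(Y_n − Y)))`
converges in law to `(X, ψ(V))` with `V` uniform on `(−1/2,1/2)^d` independent of `X`. -/
theorem stmt8 {Ω : Type*} [MeasurableSpace Ω] (P : Measure Ω) [IsProbabilityMeasure P]
    {d m : ℕ} (Y : Ω → (Fin d → ℝ)) (X : Ω → (Fin m → ℝ))
    (hY : Measurable Y) (hX : Measurable X)
    (hac : P.map Y ≪ (volume : Measure (Fin d → ℝ)))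
    (Yn : ℕ → Ω → (Fin d → ℝ))
    (hYn : ∀ n ω, Yn n ω = Y ω + (1 / (n:ℝ)) • roundTheta ((n:ℝ) • Y ω))
    (ψ : (Fin d → ℝ) → ℝ) (hψmeas : Measurable ψ)
    (hψ : IntegrableOn ψ (Set.univ.pi fun _ : Fin d => Set.Icc (-(1/2) : ℝ) (1/2))) :
    ∀ F : BoundedContinuousFunction ((Fin m → ℝ) × ℝ) ℝ,
      Tendsto (fun n : ℕ => ∫ ω, F (X ω, ψ ((n:ℝ) • (Yn n ω - Y ω))) ∂P)
        atTop
        (nhds (∫ ω, (∫ v in Set.univ.pi fun _ : Fin d => Set.Ioo (-(1/2) : ℝ) (1/2),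
          F (X ω, ψ v)) ∂P)) := by
  intro F
  classical
  open Stmt8Aux in
  have key : ∀ (H : ((Fin m → ℝ) × ℝ) → ℝ), Continuous H → (∀ z, |H z| ≤ ‖F‖) →
      ∀ n : ℕ, Integrable (fun ω => H (X ω, ψ (T d n (Y ω)))) P := by
    intro H hHc hHb n
    refine Integrable.mono' (integrable_const ‖F‖)
      (hHc.measurable.comp (hX.prodMk (hψmeas.comp
        ((Stmt8Aux.measurable_T n).comp hY)))).aestronglyMeasurable
      (Eventually.of_forall fun ω => by rw [Real.norm_eq_abs]; exact hHb _)
  open Stmt8Aux in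
  have hsm : ∀ (H : ((Fin m → ℝ) × ℝ) → ℝ), Continuous H →
      StronglyMeasurable (fun x : Fin m → ℝ => ∫ v in cubeIoc d, H (x, ψ v)) := by
    intro H hHc
    exact ((hHc.measurable.comp (measurable_fst.prodMk
      (hψmeas.comp measurable_snd))).stronglyMeasurable).integral_prod_right'
  open Stmt8Aux in
  have key2 : ∀ (H : ((Fin m → ℝ) × ℝ) → ℝ), Continuous H → (∀ z, |H z| ≤ ‖F‖) →
      Integrable (fun ω => ∫ v in cubeIoc d, H (X ω, ψ v)) P := by
    intro H hHc hHb
    refine Integrable.mono' (integrable_const ‖F‖)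
      (((hsm H hHc).comp_measurable hX).aestronglyMeasurable)
      (Eventually.of_forall fun ω => by
        rw [Real.norm_eq_abs]
        exact norm_setIntegral_cube_le (fun v => hHb _))
  open Stmt8Aux in
  have hFb : ∀ z, |F z| ≤ ‖F‖ := fun z => by
    rw [← Real.norm_eq_abs]; exact F.norm_coe_le_norm z
  open Stmt8Aux in
  have huppb : ∀ K : ℕ, ∀ z, |(fun z => -(env (-F) K z)) z| ≤ ‖F‖ := by
    intro K z
    simp only [abs_neg]
    have := abs_env_le (-F) K z
    rwa [norm_neg] at this
  open Stmt8Aux in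
  have hupp_lip : ∀ K : ℕ, LipschitzWith (K : NNReal) (fun z => -(env (-F) K z)) :=
    fun K => (env_lipschitz (-F) K).neg
  open Stmt8Aux in
  have hle_upp : ∀ K : ℕ, ∀ z, F z ≤ -(env (-F) K z) := by
    intro K z
    have := env_le (-F) K z
    simp only [BoundedContinuousFunction.coe_neg, Pi.neg_apply] at this
    linarith
  open Stmt8Aux in
  have hupp_tendsto : ∀ z, Tendsto (fun K : ℕ => -(env (-F) K z)) atTop (𝓝 (F z)) := by
    intro z
    have := (env_tendsto (-F) z).neg
    simp only [BoundedContinuousFunction.coe_neg, Pi.neg_apply, neg_neg] at this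
    exact this
  open Stmt8Aux in
  -- convergence of the limit functionals along K, via dominated convergence (twice)
  have hLtendsto : ∀ (G : ℕ → ((Fin m → ℝ) × ℝ) → ℝ), (∀ K, Continuous (G K)) →
      (∀ K z, |G K z| ≤ ‖F‖) → (∀ z, Tendsto (fun K => G K z) atTop (𝓝 (F z))) →
      Tendsto (fun K => ∫ ω, (∫ v in cubeIoc d, G K (X ω, ψ v)) ∂P) atTop
        (𝓝 (∫ ω, (∫ v in cubeIoc d, F (X ω, ψ v)) ∂P)) := by
    intro G hGc hGb hGt
    haveI : IsProbabilityMeasure ((volume : Measure (Fin d → ℝ)).restrict (cubeIoc d)) := by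
      constructor
      rw [Measure.restrict_apply_univ, volume_cubeIoc]
    have hinner : ∀ ω, Tendsto (fun K => ∫ v in cubeIoc d, G K (X ω, ψ v)) atTop
        (𝓝 (∫ v in cubeIoc d, F (X ω, ψ v))) := by
      intro ω
      refine tendsto_integral_of_dominated_convergence (fun _ => ‖F‖)
        (fun K => ((hGc K).measurable.comp
          (measurable_const.prodMk hψmeas)).aestronglyMeasurable)
        (integrable_const _)
        (fun K => Eventually.of_forall fun v => by rw [Real.norm_eq_abs]; exact hGb K _)
        (Eventually.of_forall fun v => hGt _)
    refine tendsto_integral_of_dominated_convergence (fun _ => ‖F‖)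
      (fun K => ((hsm (G K) (hGc K)).comp_measurable hX).aestronglyMeasurable)
      (integrable_const _)
      (fun K => Eventually.of_forall fun ω => by
        rw [Real.norm_eq_abs]
        exact norm_setIntegral_cube_le (fun v => hGb K _))
      (Eventually.of_forall fun ω => hinner ω)
  open Stmt8Aux in
  have main : Tendsto (fun n : ℕ => ∫ ω, F (X ω, ψ (T d n (Y ω))) ∂P) atTop
      (𝓝 (∫ ω, (∫ v in cubeIoc d, F (X ω, ψ v)) ∂P)) := by
    rw [Metric.tendsto_atTop]
    intro ε hε
    -- limits of envelopes in K
    have hlow := hLtendsto (fun K => env F K) (fun K => (env_lipschitz F K).continuous)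
      (fun K z => abs_env_le F K z) (fun z => env_tendsto F z)
    have hupp := hLtendsto (fun K => fun z => -(env (-F) K z))
      (fun K => (hupp_lip K).continuous) huppb hupp_tendsto
    obtain ⟨K₁, hK₁⟩ := Metric.tendsto_atTop.1 hlow (ε / 2) (by positivity)
    obtain ⟨K₂, hK₂⟩ := Metric.tendsto_atTop.1 hupp (ε / 2) (by positivity)
    set K := max K₁ K₂ with hK
    have hlowK := hK₁ K (le_max_left _ _)
    have huppK := hK₂ K (le_max_right _ _)
    rw [Real.dist_eq] at hlowK huppK
    -- convergence in n for fixed K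
    have hlown := tendsto_of_lipschitz P hY hX hac hψmeas (env F K)
      (env_lipschitz F K).continuous (env_lipschitz F K) (norm_nonneg F)
      (fun z => abs_env_le F K z)
    have huppn := tendsto_of_lipschitz P hY hX hac hψmeas (fun z => -(env (-F) K z))
      (hupp_lip K).continuous (hupp_lip K) (norm_nonneg F) (huppb K)
    obtain ⟨n₁, hn₁⟩ := Metric.tendsto_atTop.1 hlown (ε / 2) (by positivity)
    obtain ⟨n₂, hn₂⟩ := Metric.tendsto_atTop.1 huppn (ε / 2) (by positivity)
    refine ⟨max n₁ n₂, fun n hn => ?_⟩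
    have h1 := hn₁ n (le_trans (le_max_left _ _) hn)
    have h2 := hn₂ n (le_trans (le_max_right _ _) hn)
    rw [Real.dist_eq] at h1 h2 ⊢
    -- monotone comparisons
    have hcmp1 : ∫ ω, env F K (X ω, ψ (T d n (Y ω))) ∂P ≤
        ∫ ω, F (X ω, ψ (T d n (Y ω))) ∂P := by
      refine integral_mono (key (env F K) (env_lipschitz F K).continuous
        (fun z => abs_env_le F K z) n) (key F F.continuous hFb n) ?_
      intro ω
      exact env_le F K _
    have hcmp2 : ∫ ω, F (X ω, ψ (T d n (Y ω))) ∂P ≤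
        ∫ ω, -(env (-F) K (X ω, ψ (T d n (Y ω)))) ∂P := by
      refine integral_mono (key F F.continuous hFb n)
        (key (fun z => -(env (-F) K z)) (hupp_lip K).continuous (huppb K) n) ?_
      intro ω
      exact hle_upp K _
    rw [abs_lt] at h1 h2 hlowK huppK ⊢
    constructor
    · calc -ε < (∫ ω, (∫ v in cubeIoc d, env F K (X ω, ψ v)) ∂P)
            - (∫ ω, (∫ v in cubeIoc d, F (X ω, ψ v)) ∂P)
            + ((∫ ω, env F K (X ω, ψ (T d n (Y ω))) ∂P)
            - ∫ ω, (∫ v in cubeIoc d, env F K (X ω, ψ v)) ∂P) := by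
            have := hlowK.1; have := h1.1; linarith
        _ ≤ _ := by
            have := hcmp1; linarith
    · calc (∫ ω, F (X ω, ψ (T d n (Y ω))) ∂P)
          - (∫ ω, (∫ v in cubeIoc d, F (X ω, ψ v)) ∂P)
          ≤ (∫ ω, -(env (-F) K (X ω, ψ (T d n (Y ω)))) ∂P)
            - (∫ ω, (∫ v in cubeIoc d, F (X ω, ψ v)) ∂P) := by linarith [hcmp2]
        _ < ε := by
            have := h2.2; have := huppK.2; linarith
  open Stmt8Aux in
  have hlimeq : (∫ ω, (∫ v in cubeIoc d, F (X ω, ψ v)) ∂P) =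
      ∫ ω, (∫ v in Set.univ.pi fun _ : Fin d => Set.Ioo (-(1/2) : ℝ) (1/2),
        F (X ω, ψ v)) ∂P := by
    refine integral_congr_ae (Eventually.of_forall fun ω => ?_)
    show ∫ v, F (X ω, ψ v) ∂(volume.restrict (cubeIoc d)) =
      ∫ v, F (X ω, ψ v) ∂(volume.restrict (Set.univ.pi fun _ : Fin d => Set.Ioo (-(1/2) : ℝ) (1/2)))
    rw [restrict_cube_eq]
    rfl
  rw [← hlimeq]
  refine main.congr' ?_
  filter_upwards [eventually_ge_atTop 1] with n hn
  refine integral_congr_ae (Eventually.of_forall fun ω => ?_)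
  show F (X ω, ψ (Stmt8Aux.T d n (Y ω))) = F (X ω, ψ ((n:ℝ) • (Yn n ω - Y ω)))
  congr 2
  rw [hYn n ω]
  have hne : (n : ℝ) ≠ 0 := by
    have : (0:ℝ) < n := by exact_mod_cast hn
    exact this.ne'
  rw [add_sub_cancel_left, smul_smul, mul_one_div_cancel hne, one_smul]
  rfl
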